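/- arXiv:1804.10986 — 2 statements merged into one kernel-verified Lean document; each statement's English description precedes it below -/
import Mathlib

section
/- For d ≥ 2 and σ² = d − 1, the number of lattice points (ℓₓ, ℓₜ) ∈ ℕ² weighted by 2^{ℓₜ + (d−1)ℓₓ} in the anisotropic sparse grid index set {(ℓₓ, ℓₜ) : σℓₓ + ℓₜ/σ ≤ L}, i.e., N_L = ∑_{(ℓₓ,ℓₜ): σℓₓ + ℓₜ/σ ≤ L} 2^{ℓₜ + (d−1)ℓₓ}, satisfies N_L ≤ C · 2^{Lσ²}·(L+1) for a constant C depending only on d. -/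
theorem stmt8 (d : ℕ) (hd : 2 ≤ d) (σ : ℝ) (hσ : σ = Real.sqrt ((d : ℝ) - 1)) :
    ∃ C > (0 : ℝ), ∀ L : ℕ,
      (∑' p : ℕ × ℕ,
        if σ * p.1 + p.2 / σ ≤ (L : ℝ) then
          (2 : ℝ) ^ (p.2 + (d - 1) * p.1) else 0) ≤
      C * (2 : ℝ) ^ ((L : ℝ) * σ ^ 2) * ((L : ℝ) + 1) := by
  have hd1 : (1:ℝ) ≤ (d:ℝ) - 1 := by
    have : (2:ℝ) ≤ (d:ℝ) := by exact_mod_cast hd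
    linarith
  have hσ0 : 0 < σ := by
    rw [hσ]; exact Real.sqrt_pos.mpr (by linarith)
  have hσ1 : 1 ≤ σ := by
    rw [hσ]; exact Real.one_le_sqrt.mpr hd1
  have hσ2 : σ ^ 2 = (d:ℝ) - 1 := by
    rw [hσ, Real.sq_sqrt (by linarith)]
  set c : ℕ := d - 1 with hc
  have hccast : ((c:ℕ):ℝ) = (d:ℝ) - 1 := by
    rw [hc, Nat.cast_sub (by omega)]; norm_num
  refine ⟨2, by norm_num, fun L => ?_⟩
  set N : ℕ := ⌊σ * L⌋₊ with hN
  set T : Finset (ℕ × ℕ) := Finset.range (L+1) ×ˢ Finset.range (N+1) with hT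
  set f : ℕ × ℕ → ℝ :=
    fun p => if σ * p.1 + p.2 / σ ≤ (L : ℝ) then (2 : ℝ) ^ (p.2 + c * p.1) else 0 with hf
  -- consequences of the condition
  have hcond : ∀ p : ℕ × ℕ, σ * p.1 + p.2 / σ ≤ (L : ℝ) →
      p.1 ≤ L ∧ p.2 ≤ N ∧ p.2 + c * p.1 ≤ N := by
    intro p hp
    have h1 : (p.1 : ℝ) ≤ L := by
      have h2 : (0:ℝ) ≤ p.2 / σ := div_nonneg (Nat.cast_nonneg _) hσ0.le
      nlinarith [(Nat.cast_nonneg p.1 : (0:ℝ) ≤ (p.1:ℝ))]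
    have hmul : σ^2 * p.1 + p.2 ≤ σ * L := by
      have h3 : σ * (σ * p.1 + p.2 / σ) ≤ σ * (L:ℝ) :=
        mul_le_mul_of_nonneg_left hp hσ0.le
      have hs : σ * ((p.2:ℝ) / σ) = (p.2:ℝ) := by field_simp
      nlinarith [h3, hs]
    have he : ((p.2 + c * p.1 : ℕ) : ℝ) ≤ σ * L := by
      push_cast [hccast]
      nlinarith [(Nat.cast_nonneg p.1 : (0:ℝ) ≤ (p.1:ℝ))]
    refine ⟨by exact_mod_cast h1, ?_, ?_⟩
    · apply Nat.le_floor
      have : (p.2:ℝ) ≤ σ^2 * p.1 + p.2 := by nlinarith [(Nat.cast_nonneg p.1 : (0:ℝ) ≤ (p.1:ℝ))]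
      linarith
    · exact Nat.le_floor he
  -- the summand vanishes outside T
  have hzero : ∀ p : ℕ × ℕ, p ∉ T → f p = 0 := by
    intro p hp
    simp only [hf]
    split_ifs with h
    · exfalso
      obtain ⟨h1, h2, _⟩ := hcond p h
      exact hp (by simp [hT, Finset.mem_product, Nat.lt_succ_iff, h1, h2])
    · rfl
  have htsum : (∑' p : ℕ × ℕ, f p) = ∑ p ∈ T, f p := tsum_eq_sum hzero
  -- pointwise bound
  have hpt : ∀ p ∈ T, f p ≤ (if p.2 + c * p.1 ≤ N then (2:ℝ) ^ (p.2 + c * p.1) else 0) := by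
    intro p _
    simp only [hf]
    split_ifs with h h2
    · exact le_refl _
    · exact absurd (hcond p h).2.2 h2
    · positivity
    · exact le_refl _
  have hgeom : ∀ a : ℕ,
      (∑ b ∈ Finset.range (N+1), (if b + c * a ≤ N then (2:ℝ) ^ (b + c * a) else 0))
        ≤ 2 * 2 ^ N := by
    intro a
    rw [← Finset.sum_filter]
    have himg : (∑ b ∈ (Finset.range (N+1)).filter (fun b => b + c * a ≤ N),
        (2:ℝ) ^ (b + c * a)) =
        ∑ e ∈ ((Finset.range (N+1)).filter (fun b => b + c * a ≤ N)).image
          (fun b => b + c * a), (2:ℝ) ^ e := by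
      rw [Finset.sum_image]
      intro x _ y _ h
      have h' : x + c * a = y + c * a := h
      omega
    rw [himg]
    have hsub : ((Finset.range (N+1)).filter (fun b => b + c * a ≤ N)).image
        (fun b => b + c * a) ⊆ Finset.range (N+1) := by
      intro e he
      simp only [Finset.mem_image, Finset.mem_filter, Finset.mem_range] at he ⊢
      obtain ⟨b, ⟨_, hb⟩, rfl⟩ := he
      omega
    calc _ ≤ ∑ e ∈ Finset.range (N+1), (2:ℝ) ^ e :=
          Finset.sum_le_sum_of_subset_of_nonneg hsub (fun _ _ _ => by positivity)
      _ = 2 ^ (N+1) - 1 := by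
          rw [geom_sum_eq (by norm_num)]; norm_num
      _ ≤ 2 * 2 ^ N := by rw [pow_succ]; ring_nf; linarith
  have hsum : (∑ p ∈ T, f p) ≤ (L + 1 : ℝ) * (2 * 2 ^ N) := by
    calc (∑ p ∈ T, f p)
        ≤ ∑ p ∈ T, (if p.2 + c * p.1 ≤ N then (2:ℝ) ^ (p.2 + c * p.1) else 0) :=
          Finset.sum_le_sum hpt
      _ = ∑ a ∈ Finset.range (L+1), ∑ b ∈ Finset.range (N+1),
            (if b + c * a ≤ N then (2:ℝ) ^ (b + c * a) else 0) := by
          rw [hT, Finset.sum_product]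
      _ ≤ ∑ a ∈ Finset.range (L+1), (2 * 2 ^ N : ℝ) :=
          Finset.sum_le_sum (fun a _ => hgeom a)
      _ = (L + 1 : ℝ) * (2 * 2 ^ N) := by
          rw [Finset.sum_const, Finset.card_range, nsmul_eq_mul]; push_cast; ring
  -- compare 2^N with the rpow
  have hNle : N ≤ c * L := by
    have hσle : σ ≤ (d:ℝ) - 1 := by nlinarith [hσ1, hσ2]
    have h1 : σ * L ≤ ((c * L : ℕ) : ℝ) := by
      push_cast [hccast]
      exact mul_le_mul_of_nonneg_right hσle (Nat.cast_nonneg L)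
    calc N ≤ ⌊((c * L : ℕ) : ℝ)⌋₊ := Nat.floor_mono h1
      _ = c * L := Nat.floor_natCast _
  have hrpow : (2:ℝ) ^ ((L : ℝ) * σ ^ 2) = (2:ℝ) ^ (c * L : ℕ) := by
    have : (L : ℝ) * σ ^ 2 = ((c * L : ℕ) : ℝ) := by
      push_cast [hccast, hσ2]; ring
    rw [this, Real.rpow_natCast]
  have hpowle : (2:ℝ) ^ N ≤ (2:ℝ) ^ (c * L : ℕ) :=
    pow_le_pow_right₀ (by norm_num) hNle
  calc (∑' p : ℕ × ℕ, f p) = ∑ p ∈ T, f p := htsum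
    _ ≤ (L + 1 : ℝ) * (2 * 2 ^ N) := hsum
    _ ≤ (L + 1 : ℝ) * (2 * (2:ℝ) ^ (c * L : ℕ)) := by
        have h0 : (0:ℝ) ≤ (L:ℝ) + 1 := by positivity
        nlinarith [hpowle]
    _ = 2 * (2 : ℝ) ^ ((L : ℝ) * σ ^ 2) * ((L : ℝ) + 1) := by
        rw [hrpow]; ring
end

section
/- In the combination technique, if Π_{i,j} denotes the L²-orthogonal projection onto nested spaces X_i ⊗ Y_j with X_{i} ⊆ X_{i+1}, Y_j ⊆ Y_{j+1}, and if φ lies in the sparse space ⊕_{i+j ≤ L} W_i ⊗ Z_j (where X_i = ⊕_{k≤i} W_k and Y_j = ⊕_{k≤j} Z_k are orthogonal decompositions), then φ = ∑_{l=0}^{L} Π_{l, L−l} φ − ∑_{l=1}^{L} Π_{l−1, L−l} φ. -/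
open scoped InnerProductSpace

/-- The full tensor-product space `X_i ⊗ Y_j`, modelled as the closure of the span of the
pairwise orthogonal subspaces `K (a, b)` (representing `W_a ⊗ Z_b`) with `a ≤ i`, `b ≤ j`. -/
noncomputable def sgX {E : Type*} [NormedAddCommGroup E] [InnerProductSpace ℝ E]
    (K : ℕ × ℕ → Submodule ℝ E) (i j : ℕ) : Submodule ℝ E :=
  (⨆ p ∈ {p : ℕ × ℕ | p.1 ≤ i ∧ p.2 ≤ j}, K p).topologicalClosure

section aux

variable {E : Type*} [NormedAddCommGroup E] [InnerProductSpace ℝ E] [CompleteSpace E]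

lemma mem_sgX_of {K : ℕ × ℕ → Submodule ℝ E} {i j a b : ℕ} (ha : a ≤ i) (hb : b ≤ j)
    {x : E} (hx : x ∈ K (a, b)) : x ∈ sgX K i j := by
  have hle : K (a, b) ≤ ⨆ p ∈ {p : ℕ × ℕ | p.1 ≤ i ∧ p.2 ≤ j}, K p :=
    le_iSup₂ (f := fun p (_ : p ∈ {p : ℕ × ℕ | p.1 ≤ i ∧ p.2 ≤ j}) => K p) (a, b) ⟨ha, hb⟩
  exact Submodule.le_topologicalClosure _ (hle hx)

lemma mem_orth_sgX {K : ℕ × ℕ → Submodule ℝ E}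
    (horth : ∀ p q : ℕ × ℕ, p ≠ q → ∀ x ∈ K p, ∀ y ∈ K q, ⟪x, y⟫_ℝ = 0)
    {i j a b : ℕ} (h : ¬(a ≤ i ∧ b ≤ j)) {x : E} (hx : x ∈ K (a, b)) :
    x ∈ (sgX K i j)ᗮ := by
  have h1 : x ∈ (⨆ p ∈ {p : ℕ × ℕ | p.1 ≤ i ∧ p.2 ≤ j}, K p)ᗮ := by
    rw [iSup_subtype', ← Submodule.iInf_orthogonal]
    refine Submodule.mem_iInf _ |>.2 fun ⟨p, hp⟩ => ?_
    rw [Submodule.mem_orthogonal]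
    intro y hy
    refine horth p (a, b) ?_ y hy x hx
    rintro rfl
    exact h hp
  rw [sgX, ← Submodule.orthogonal_orthogonal_eq_closure,
    Submodule.triorthogonal_eq_orthogonal]
  exact h1

lemma proj_sgX_of_mem (K : ℕ × ℕ → Submodule ℝ E)
    (horth : ∀ p q : ℕ × ℕ, p ≠ q → ∀ x ∈ K p, ∀ y ∈ K q, ⟪x, y⟫_ℝ = 0)
    [∀ i j, CompleteSpace (sgX K i j)] (i j a b : ℕ) (x : E) (hx : x ∈ K (a, b)) :
    (Submodule.orthogonalProjection (sgX K i j) x : E) = if a ≤ i ∧ b ≤ j then x else 0 := by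
  split_ifs with h
  · exact Submodule.starProjection_eq_self_iff.2 (mem_sgX_of h.1 h.2 hx)
  · rw [Submodule.orthogonalProjectionOnto_apply_of_mem_orthogonal
      (mem_orth_sgX horth h hx)]
    rfl

end aux

theorem stmt17 {E : Type*} [NormedAddCommGroup E] [InnerProductSpace ℝ E]
    [CompleteSpace E] (K : ℕ × ℕ → Submodule ℝ E)
    (horth : ∀ p q : ℕ × ℕ, p ≠ q → ∀ x ∈ K p, ∀ y ∈ K q, ⟪x, y⟫_ℝ = 0)
    [∀ i j, CompleteSpace (sgX K i j)]
    (L : ℕ) (φ : E) (hφ : φ ∈ ⨆ p ∈ {p : ℕ × ℕ | p.1 + p.2 ≤ L}, K p) :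
    φ = ∑ l ∈ Finset.range (L + 1),
          (Submodule.orthogonalProjection (sgX K l (L - l)) φ : E) -
        ∑ l ∈ Finset.Icc 1 L,
          (Submodule.orthogonalProjection (sgX K (l - 1) (L - l)) φ : E) := by
  rw [iSup_subtype'] at hφ
  refine Submodule.iSup_induction
    (motive := fun ψ => ψ = ∑ l ∈ Finset.range (L + 1),
          (Submodule.orthogonalProjection (sgX K l (L - l)) ψ : E) -
        ∑ l ∈ Finset.Icc 1 L,
          (Submodule.orthogonalProjection (sgX K (l - 1) (L - l)) ψ : E))
    _ hφ (fun p x hx => ?_) (by simp) (fun x y hx' hy' => ?_)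
  ·
    obtain ⟨⟨a, b⟩, hab⟩ := p
    simp only [Set.mem_setOf_eq] at hab
    have key : ∀ i j, (Submodule.orthogonalProjection (sgX K i j) x : E)
        = if a ≤ i ∧ b ≤ j then x else 0 := fun i j =>
      proj_sgX_of_mem K horth i j a b x hx
    simp only [key]
    have e1 : ∑ l ∈ Finset.range (L + 1), (if a ≤ l ∧ b ≤ L - l then x else 0)
        = ∑ _l ∈ Finset.Icc a (L - b), x := by
      rw [← Finset.sum_filter]
      apply Finset.sum_congr _ (fun _ _ => rfl)
      ext l
      simp only [Finset.mem_filter, Finset.mem_range, Finset.mem_Icc]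
      omega
    have e2 : ∑ l ∈ Finset.Icc 1 L, (if a ≤ l - 1 ∧ b ≤ L - l then x else 0)
        = ∑ _l ∈ Finset.Icc (a + 1) (L - b), x := by
      rw [← Finset.sum_filter]
      apply Finset.sum_congr _ (fun _ _ => rfl)
      ext l
      simp only [Finset.mem_filter, Finset.mem_Icc]
      omega
    rw [e1, e2, Finset.sum_const, Finset.sum_const, Nat.card_Icc, Nat.card_Icc]
    have h1 : L - b + 1 - a = (L - b + 1 - (a + 1)) + 1 := by omega
    rw [h1, succ_nsmul]
    abel
  · simp only [map_add, Submodule.coe_add, Finset.sum_add_distrib]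
    conv_lhs => rw [hx', hy']
    abel
end
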